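/- Assume additionally μ₀ ≤ μ₁ ≤ … ≤ μ_{d−2}. For all integers 1 ≤ i ≤ j ≤ d−1 and every u ∈ [0,1], setting ρ_{i,u} = (1−u)|0⟩⟨0| + u|i⟩⟨i| and ρ_{j,u} = (1−u)|0⟩⟨0| + u|j⟩⟨j|, one has S(O^c(ρ_{i,u})) ≥ S(O^c(ρ_{j,u})) and consequently S(O(ρ_{i,u})) − S(O^c(ρ_{i,u})) ≤ S(O(ρ_{j,u})) − S(O^c(ρ_{j,u})). (Hence the coherent informations of the qubit sub-channels of O obtained by restricting the input to span{|0⟩,|i⟩} are monotonically nondecreasing in i.) -/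

import Mathlib

open Matrix ComplexOrder

/-- Von Neumann entropy (base-2) of a matrix: −∑ λᵢ log₂ λᵢ over its eigenvalues
(0 if the matrix is not Hermitian). -/
noncomputable def vnEntropy {n : ℕ} (ρ : Matrix (Fin n) (Fin n) ℂ) : ℝ :=
  if h : ρ.IsHermitian then -∑ i, (h.eigenvalues i) * Real.logb 2 (h.eigenvalues i) else 0

/-- The basis ket |i⟩ of ℂ^d (zero if out of range). -/
noncomputable def bket (d i : ℕ) : Fin d → ℂ := fun p => if (p : ℕ) = i then 1 else 0

/-- The projector |i⟩⟨i| on ℂ^d. -/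
noncomputable def bproj (d i : ℕ) : Matrix (Fin d) (Fin d) ℂ :=
  Matrix.vecMulVec (bket d i) (star (bket d i))

/-- Kraus operator K_k = μ_k|k⟩⟨0| + |d−1⟩⟨k+1| of the channel O. -/
noncomputable def KrO (d : ℕ) (μ : ℕ → ℝ) (k : ℕ) : Matrix (Fin d) (Fin d) ℂ :=
  ((μ k : ℝ) : ℂ) • Matrix.vecMulVec (bket d k) (star (bket d 0)) +
    Matrix.vecMulVec (bket d (d-1)) (star (bket d (k+1)))

/-- The channel O : M_d(ℂ) → M_d(ℂ) with parameters μ₀,…,μ_{d−2}. -/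
noncomputable def chanO (d : ℕ) (μ : ℕ → ℝ) (X : Matrix (Fin d) (Fin d) ℂ) :
    Matrix (Fin d) (Fin d) ℂ :=
  ∑ k ∈ Finset.range (d - 1), KrO d μ k * X * (KrO d μ k)ᴴ

/-- Kraus operator L_j = μ_j|j⟩⟨0| of O^c, for 0 ≤ j ≤ d−2. -/
noncomputable def LrO (d : ℕ) (μ : ℕ → ℝ) (j : ℕ) : Matrix (Fin (d-1)) (Fin d) ℂ :=
  ((μ j : ℝ) : ℂ) • Matrix.vecMulVec (bket (d-1) j) (star (bket d 0))

/-- Kraus operator L_{d−1} = ∑_{i=1}^{d−1}|i−1⟩⟨i| of O^c. -/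
noncomputable def VrO (d : ℕ) : Matrix (Fin (d-1)) (Fin d) ℂ :=
  Matrix.of fun a b => if (b : ℕ) = (a : ℕ) + 1 then 1 else 0

/-- The complementary channel O^c : M_d(ℂ) → M_{d−1}(ℂ). -/
noncomputable def chanOc (d : ℕ) (μ : ℕ → ℝ) (X : Matrix (Fin d) (Fin d) ℂ) :
    Matrix (Fin (d-1)) (Fin (d-1)) ℂ :=
  (∑ j ∈ Finset.range (d - 1), LrO d μ j * X * (LrO d μ j)ᴴ) + VrO d * X * (VrO d)ᴴ

/-! ### Auxiliary lemmas -/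

section Aux

open Polynomial

lemma charpoly_conj_unitary {n : Type*} [DecidableEq n] [Fintype n]
    (U : Matrix.unitaryGroup n ℂ) (M : Matrix n n ℂ) :
    ((U : Matrix n n ℂ) * M * star (U : Matrix n n ℂ)).charpoly = M.charpoly := by
  have hU1 : (U : Matrix n n ℂ) * star (U : Matrix n n ℂ) = 1 := U.2.2
  set f : Matrix n n ℂ →+* Matrix n n ℂ[X] := (C : ℂ →+* ℂ[X]).mapMatrix with hf
  have hcomm : ∀ N : Matrix n n ℂ[X], Commute (scalar n (X : ℂ[X])) N :=
    fun N => scalar_commute _ (fun r' => Commute.all _ _) _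
  have key : charmatrix ((U : Matrix n n ℂ) * M * star (U : Matrix n n ℂ))
      = f U * charmatrix M * f (star (U : Matrix n n ℂ)) := by
    rw [charmatrix, charmatrix, _root_.map_mul, _root_.map_mul]
    rw [mul_sub, sub_mul]
    congr 1
    rw [← (hcomm (f (U : Matrix n n ℂ))).eq, mul_assoc, ← _root_.map_mul, hU1,
      _root_.map_one, mul_one]
  rw [Matrix.charpoly, Matrix.charpoly, key, det_mul, det_mul]
  have h2 : det (f (U : Matrix n n ℂ)) * det (f (star (U : Matrix n n ℂ))) = 1 := by
    rw [← det_mul, ← _root_.map_mul, hU1, _root_.map_one, det_one]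
  calc det (f (U:Matrix n n ℂ)) * det (charmatrix M) * det (f (star (U:Matrix n n ℂ)))
      = det (charmatrix M) * (det (f (U:Matrix n n ℂ)) * det (f (star (U:Matrix n n ℂ)))) := by
        ring
    _ = det (charmatrix M) := by rw [h2, mul_one]

lemma eigenvalues_diagonal_sum {n : ℕ} (v : Fin n → ℝ) (g : ℝ → ℝ)
    (h : (Matrix.diagonal (fun i => ((v i : ℝ) : ℂ))).IsHermitian) :
    ∑ i, g (h.eigenvalues i) = ∑ i, g (v i) := by
  have hcm : ∀ w : Fin n → ℂ, (Matrix.diagonal w).charpoly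
      = ∏ i, (X - C (w i)) := by
    intro w
    have : charmatrix (Matrix.diagonal w) = Matrix.diagonal (fun i => (X : ℂ[X]) - C (w i)) := by
      ext a b
      by_cases hab : a = b
      · subst hab; simp [charmatrix_apply_eq]
      · simp [charmatrix_apply_ne _ _ _ hab, Matrix.diagonal_apply_ne _ hab]
    rw [Matrix.charpoly, this, det_diagonal]
  have hch : (∏ i, ((X : ℂ[X]) - C ((v i : ℝ) : ℂ)))
      = ∏ i, ((X : ℂ[X]) - C ((h.eigenvalues i : ℝ) : ℂ)) := by
    rw [← hcm, ← hcm]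
    conv_lhs => rw [h.spectral_theorem]
    exact charpoly_conj_unitary _ _
  have r1 := Polynomial.roots_multiset_prod_X_sub_C
    (Finset.univ.val.map (fun i : Fin n => ((v i : ℝ) : ℂ)))
  have r2 := Polynomial.roots_multiset_prod_X_sub_C
    (Finset.univ.val.map (fun i : Fin n => ((h.eigenvalues i : ℝ) : ℂ)))
  have e2 : ∀ w : Fin n → ℝ,
      ((Finset.univ.val.map (fun i => ((w i : ℝ) : ℂ))).map (fun a => X - C a)).prod
        = ∏ i, ((X : ℂ[X]) - C ((w i : ℝ) : ℂ)) := by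
    intro w; rw [Multiset.map_map]; rfl
  have hms : (Finset.univ.val.map (fun i => ((v i : ℝ) : ℂ)))
      = (Finset.univ.val.map (fun i => ((h.eigenvalues i : ℝ) : ℂ))) := by
    rw [← r1, ← r2, e2, e2, hch]
  have hsum := congrArg (fun s : Multiset ℂ => (s.map (fun z : ℂ => g z.re)).sum) hms
  have e1 : ∀ w : Fin n → ℝ, ((Finset.univ.val.map (fun i => ((w i : ℝ) : ℂ))).map
      (fun z : ℂ => g z.re)).sum = ∑ i, g (w i) := by
    intro w
    rw [Multiset.map_map]
    simp [Finset.sum, Function.comp]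
  rw [e1, e1] at hsum
  exact hsum.symm

lemma vnEntropy_diagonal {n : ℕ} (v : Fin n → ℝ) :
    vnEntropy (Matrix.diagonal (fun i => ((v i : ℝ) : ℂ)))
      = -∑ i, v i * Real.logb 2 (v i) := by
  have hherm : (Matrix.diagonal (fun i => ((v i : ℝ) : ℂ))).IsHermitian := by
    rw [Matrix.IsHermitian, Matrix.diagonal_conjTranspose]
    have hst : (star fun i : Fin n => ((v i : ℝ) : ℂ)) = fun i : Fin n => ((v i : ℝ) : ℂ) := by
      funext i
      simp only [Pi.star_apply]
      exact Complex.conj_ofReal (v i)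
    rw [hst]
  rw [vnEntropy, dif_pos hherm,
    eigenvalues_diagonal_sum v (fun x => x * Real.logb 2 x) hherm]

lemma bket_dot {d p : ℕ} (q : ℕ) (hp : p < d) :
    star (bket d p) ⬝ᵥ bket d q = if q = p then 1 else 0 := by
  classical
  simp only [dotProduct, Pi.star_apply, bket]
  have : ∀ x : Fin d, star (if (x : ℕ) = p then (1:ℂ) else 0) * (if (x : ℕ) = q then 1 else 0)
      = if x = (⟨p, hp⟩ : Fin d) then (if (x : ℕ) = q then (1:ℂ) else 0) else 0 := by
    intro x
    by_cases h : (x:ℕ) = p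
    · simp [h, Fin.ext_iff]
    · simp [h, Fin.ext_iff]
  rw [Finset.sum_congr rfl (fun x _ => this x), Finset.sum_ite_eq' Finset.univ]
  by_cases h : q = p
  · simp [h]
  · simp [h, Ne.symm h]

lemma triple_key {m d : ℕ} (w w' : Fin m → ℂ) (v v' : Fin d → ℂ)
    (X : Matrix (Fin d) (Fin d) ℂ) :
    vecMulVec w (star v) * X * (vecMulVec w' (star v'))ᴴ
      = (star v ⬝ᵥ (X *ᵥ v')) • vecMulVec w (star w') := by
  ext a b
  simp only [Matrix.mul_apply, vecMulVec_apply, conjTranspose_apply, Matrix.smul_apply,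
    dotProduct, mulVec, Pi.star_apply, star_mul', star_star, smul_eq_mul, Finset.sum_mul,
    Finset.mul_sum]
  rw [Finset.sum_comm]
  exact Finset.sum_congr rfl fun c _ => Finset.sum_congr rfl fun e _ => by ring

lemma vecMulVec_mulVec' {d : ℕ} (w : Fin d → ℂ) (v : Fin d → ℂ) (x : Fin d → ℂ) :
    vecMulVec w (star v) *ᵥ x = (star v ⬝ᵥ x) • w := by
  ext a
  simp only [mulVec, vecMulVec_apply, dotProduct, Pi.smul_apply, smul_eq_mul, Finset.sum_mul]
  exact Finset.sum_congr rfl fun e _ => by ring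

lemma bproj_scal {d p q r : ℕ} (hp : p < d) (hq : q < d) :
    star (bket d p) ⬝ᵥ (bproj d q *ᵥ bket d r)
      = (if q = p then 1 else 0) * (if r = q then 1 else 0) := by
  rw [bproj, vecMulVec_mulVec', dotProduct_smul, bket_dot r hq, bket_dot q hp]
  simp only [smul_eq_mul]
  by_cases h1 : q = p <;> by_cases h2 : r = q <;> simp [h1, h2]

lemma rho_scal {d m : ℕ} (u : ℝ) (hm1 : 1 ≤ m) (hm : m < d) (hd : 0 < d) :
    star (bket d 0) ⬝ᵥ ((((1 - u : ℝ) : ℂ) • bproj d 0 + (u : ℂ) • bproj d m) *ᵥ bket d 0)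
      = ((1 - u : ℝ) : ℂ) := by
  rw [add_mulVec, smul_mulVec, smul_mulVec, dotProduct_add,
    dotProduct_smul, dotProduct_smul, bproj_scal hd hd, bproj_scal hd hm]
  have : ¬ (m = 0) := by omega
  simp [this]

lemma LrO_term {d m : ℕ} (μ : ℕ → ℝ) (u : ℝ) (j : ℕ) (hm1 : 1 ≤ m) (hm : m < d) (hd : 0 < d) :
    LrO d μ j * (((1 - u : ℝ) : ℂ) • bproj d 0 + (u : ℂ) • bproj d m) * (LrO d μ j)ᴴ
      = (((1 - u) * (μ j)^2 : ℝ) : ℂ) • vecMulVec (bket (d-1) j) (star (bket (d-1) j)) := by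
  set ρ := (((1 - u : ℝ) : ℂ) • bproj d 0 + (u : ℂ) • bproj d m)
  rw [LrO, conjTranspose_smul, Matrix.smul_mul, Matrix.smul_mul, Matrix.mul_smul,
    triple_key, rho_scal u hm1 hm hd]
  rw [smul_smul, smul_smul]
  congr 1
  rw [Complex.star_def, Complex.conj_ofReal]
  push_cast
  ring

lemma VrO_term {d m : ℕ} (u : ℝ) (hm1 : 1 ≤ m) (hm : m ≤ d - 1) (hd : 3 ≤ d) :
    VrO d * (((1-u:ℝ):ℂ) • bproj d 0 + (u:ℂ) • bproj d m) * (VrO d)ᴴ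
      = (u:ℂ) • vecMulVec (bket (d-1) (m-1)) (star (bket (d-1) (m-1))) := by
  set ρ := (((1-u:ℝ):ℂ) • bproj d 0 + (u:ℂ) • bproj d m) with hρ
  ext a b
  have ha : (a:ℕ)+1 < d := by omega
  have hb : (b:ℕ)+1 < d := by omega
  have e1 : ∀ e : Fin d, ∑ c : Fin d, (VrO d) a c * ρ c e = ρ ⟨(a:ℕ)+1, ha⟩ e := by
    intro e
    have h : ∀ c : Fin d, (VrO d) a c * ρ c e
        = if c = ⟨(a:ℕ)+1, ha⟩ then ρ c e else 0 := by
      intro c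
      by_cases h : (c:ℕ) = (a:ℕ)+1 <;> simp [VrO, h, Fin.ext_iff]
    rw [Finset.sum_congr rfl (fun c _ => h c), Finset.sum_ite_eq' Finset.univ]
    simp
  have e2 : (VrO d * ρ * (VrO d)ᴴ) a b = ρ ⟨(a:ℕ)+1, ha⟩ ⟨(b:ℕ)+1, hb⟩ := by
    rw [Matrix.mul_apply]
    have h : ∀ e : Fin d, (VrO d * ρ) a e * (VrO d)ᴴ e b
        = if e = ⟨(b:ℕ)+1, hb⟩ then (VrO d * ρ) a e else 0 := by
      intro e
      by_cases h : (e:ℕ) = (b:ℕ)+1 <;> simp [VrO, h, Fin.ext_iff]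
    rw [Finset.sum_congr rfl (fun e _ => h e), Finset.sum_ite_eq' Finset.univ]
    simp only [Finset.mem_univ, if_true, Matrix.mul_apply]
    rw [e1 ⟨(b:ℕ)+1, hb⟩]
  rw [e2, hρ]
  have h0 : ¬ ((a:ℕ)+1 = 0) := by omega
  simp only [Matrix.add_apply, Matrix.smul_apply, bproj, vecMulVec_apply, bket,
    Pi.star_apply, Matrix.smul_apply, smul_eq_mul]
  rw [if_neg h0]
  split_ifs
  all_goals simp only [star_one, star_zero, one_mul, mul_one, mul_zero, zero_mul]
  all_goals (try rfl)
  all_goals (try ring)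
  all_goals exfalso
  all_goals (try assumption)
  all_goals omega

lemma chanOc_eval (d : ℕ) (hd : 3 ≤ d) (μ : ℕ → ℝ) (u : ℝ) (m : ℕ) (hm1 : 1 ≤ m)
    (hm : m ≤ d - 1) :
    chanOc d μ (((1-u:ℝ):ℂ) • bproj d 0 + (u:ℂ) • bproj d m)
      = Matrix.diagonal (fun k : Fin (d-1) =>
          ((((1-u) * (μ (k:ℕ))^2 + if (k:ℕ) = m - 1 then u else 0) : ℝ) : ℂ)) := by
  have hd0 : 0 < d := by omega
  have hmd : m < d := by omega
  rw [chanOc, VrO_term u hm1 hm hd,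
    Finset.sum_congr rfl (fun j _ => LrO_term μ u j hm1 hmd hd0)]
  ext a b
  have hav : (a:ℕ) < d - 1 := a.2
  simp only [Matrix.add_apply, Matrix.sum_apply, Matrix.smul_apply, vecMulVec_apply,
    bket, Pi.star_apply, smul_eq_mul]
  have hterm : ∀ j ∈ Finset.range (d-1),
      (((1-u) * (μ j)^2 : ℝ):ℂ) * ((if (a:ℕ) = j then (1:ℂ) else 0) *
        star (if (b:ℕ) = j then (1:ℂ) else 0))
      = if j = (a:ℕ) then (if (b:ℕ) = (a:ℕ) then (((1-u) * (μ j)^2 : ℝ):ℂ) else 0) else 0 := by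
    intro j _
    by_cases h1 : (a:ℕ) = j
    · subst h1
      by_cases h2 : (b:ℕ) = (a:ℕ) <;> simp [h2]
    · rw [if_neg h1, if_neg (fun hh : j = (a:ℕ) => h1 hh.symm)]
      ring
  rw [Finset.sum_congr rfl hterm, Finset.sum_ite_eq' (Finset.range (d-1))]
  rw [if_pos (Finset.mem_range.mpr hav)]
  rw [Matrix.diagonal_apply]
  by_cases hab : a = b
  · subst hab
    rw [if_pos rfl, if_pos rfl]
    push_cast
    by_cases h3 : (a:ℕ) = m - 1 <;> simp [h3]
  · have hab' : ¬ ((b:ℕ) = (a:ℕ)) := fun h => hab (Fin.ext h.symm)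
    rw [if_neg hab', if_neg hab]
    by_cases h3 : (a:ℕ) = m - 1 <;> by_cases h4 : (b:ℕ) = m - 1 <;>
      simp [h3, h4] <;> exfalso <;> exact hab (Fin.ext (h3.trans h4.symm))

lemma rho_scal2 {d m : ℕ} (p r : ℕ) (u : ℝ) (hp : p < d) (hm : m < d) (hd : 0 < d) :
    star (bket d p) ⬝ᵥ ((((1-u:ℝ):ℂ) • bproj d 0 + (u:ℂ) • bproj d m) *ᵥ bket d r)
      = ((1-u:ℝ):ℂ) * ((if (0:ℕ) = p then 1 else 0) * (if r = 0 then 1 else 0))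
        + (u:ℂ) * ((if m = p then 1 else 0) * (if r = m then 1 else 0)) := by
  rw [add_mulVec, smul_mulVec, smul_mulVec, dotProduct_add, dotProduct_smul,
    dotProduct_smul, bproj_scal hp hd, bproj_scal hp hm]
  simp only [smul_eq_mul]

lemma expand0 {d : ℕ} (c : ℂ) (A B X : Matrix (Fin d) (Fin d) ℂ) :
    (c • A + B) * X * (c • A + B)ᴴ
      = (c * star c) • (A * X * Aᴴ) + c • (A * X * Bᴴ) + star c • (B * X * Aᴴ) + B * X * Bᴴ := by
  rw [conjTranspose_add, conjTranspose_smul]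
  simp only [Matrix.add_mul, Matrix.mul_add, Matrix.smul_mul, Matrix.mul_smul, smul_smul,
    smul_add]
  rw [mul_comm (star c) c]
  abel

lemma KrO_term {d m : ℕ} (μ : ℕ → ℝ) (u : ℝ) (k : ℕ) (hk : k < d - 1)
    (hm1 : 1 ≤ m) (hm : m < d) (hd : 3 ≤ d) :
    KrO d μ k * (((1-u:ℝ):ℂ) • bproj d 0 + (u:ℂ) • bproj d m) * (KrO d μ k)ᴴ
      = (((1-u) * (μ k)^2 : ℝ):ℂ) • bproj d k
        + (if m = k+1 then (u:ℂ) else 0) • bproj d (d-1) := by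
  have hd0 : 0 < d := by omega
  have hk1 : k + 1 < d := by omega
  set ρ := (((1-u:ℝ):ℂ) • bproj d 0 + (u:ℂ) • bproj d m) with hρ
  set W1 := vecMulVec (bket d k) (star (bket d 0)) with hW1
  set W2 := vecMulVec (bket d (d-1)) (star (bket d (k+1))) with hW2
  set c : ℂ := ((μ k : ℝ) : ℂ) with hc
  have hm0 : ¬ (m = 0) := by omega
  have h0m : ¬ ((0:ℕ) = m) := by omega
  have hk10 : ¬ (k + 1 = 0) := by omega
  have h0k1 : ¬ ((0:ℕ) = k + 1) := by omega
  have t11 : W1 * ρ * W1ᴴ = ((1-u:ℝ):ℂ) • bproj d k := by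
    rw [hW1, triple_key, rho_scal2 0 0 u hd0 hm hd0, ← bproj]
    simp [hm0, h0m]
  have t12 : W1 * ρ * W2ᴴ = 0 := by
    rw [hW1, hW2, triple_key, rho_scal2 0 (k+1) u hd0 hm hd0]
    simp [hm0, hk10]
  have t21 : W2 * ρ * W1ᴴ = 0 := by
    rw [hW1, hW2, triple_key, rho_scal2 (k+1) 0 u hk1 hm hd0]
    simp [h0k1, h0m]
  have t22 : W2 * ρ * W2ᴴ = (if m = k+1 then (u:ℂ) else 0) • bproj d (d-1) := by
    rw [hW2, triple_key, rho_scal2 (k+1) (k+1) u hk1 hm hd0, ← bproj]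
    by_cases hmk : m = k + 1
    · simp [hmk, h0k1]
    · simp [hmk, h0k1, fun hh : k + 1 = m => hmk hh.symm]
  have expand : KrO d μ k * ρ * (KrO d μ k)ᴴ
      = (c * star c) • (W1 * ρ * W1ᴴ) + c • (W1 * ρ * W2ᴴ)
        + star c • (W2 * ρ * W1ᴴ) + W2 * ρ * W2ᴴ := by
    rw [KrO, ← hW1, ← hW2, ← hc, expand0]
  rw [expand, t11, t12, t21, t22, smul_zero, smul_zero, add_zero, add_zero, smul_smul]
  congr 1
  congr 1
  rw [hc, Complex.star_def, Complex.conj_ofReal]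
  push_cast
  ring

lemma chanO_eval (d : ℕ) (hd : 3 ≤ d) (μ : ℕ → ℝ) (u : ℝ) (m : ℕ) (hm1 : 1 ≤ m)
    (hm : m ≤ d - 1) :
    chanO d μ (((1-u:ℝ):ℂ) • bproj d 0 + (u:ℂ) • bproj d m)
      = (∑ k ∈ Finset.range (d-1), (((1-u) * (μ k)^2 : ℝ):ℂ) • bproj d k)
        + (u:ℂ) • bproj d (d-1) := by
  have hmd : m < d := by omega
  rw [chanO, Finset.sum_congr rfl
    (fun k hk => KrO_term μ u k (Finset.mem_range.mp hk) hm1 hmd hd)]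
  rw [Finset.sum_add_distrib]
  congr 1
  rw [← Finset.sum_smul]
  congr 1
  have : ∀ k ∈ Finset.range (d-1), (if m = k+1 then (u:ℂ) else 0)
      = if k = m - 1 then (u:ℂ) else 0 := by
    intro k _
    by_cases h : m = k + 1
    · rw [if_pos h, if_pos (by omega)]
    · rw [if_neg h, if_neg (by omega)]
  rw [Finset.sum_congr rfl this, Finset.sum_ite_eq' (Finset.range (d-1)),
    if_pos (Finset.mem_range.mpr (by omega))]

lemma trapezoid {a b u : ℝ} (ha : 0 ≤ a) (hab : a ≤ b) (hu : 0 ≤ u) :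
    (a+u) * Real.log (a+u) + b * Real.log b ≤ a * Real.log a + (b+u) * Real.log (b+u) := by
  set f : ℝ → ℝ := fun x => x * Real.log x with hf
  have hcv := Real.convexOn_mul_log
  rcases eq_or_lt_of_le (by linarith : (0:ℝ) ≤ b + u - a) with hD | hD
  · have h1 : a = b := by linarith [le_antisymm (by linarith) hu]
    have h2 : u = 0 := by linarith
    subst h1; rw [h2]; ring_nf; rfl
  · set t : ℝ := u / (b + u - a) with ht
    have hD' : b + u - a > 0 := hD
    have ht0 : 0 ≤ t := div_nonneg hu (le_of_lt hD')
    have ht1 : t ≤ 1 := by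
      rw [ht, div_le_one hD']; linarith
    have hmem1 : a ∈ Set.Ici (0:ℝ) := ha
    have hmem2 : b + u ∈ Set.Ici (0:ℝ) := by simp; linarith
    have key1 : f ((1-t) * a + t * (b+u)) ≤ (1-t) * f a + t * f (b+u) :=
      hcv.2 hmem1 hmem2 (by linarith) ht0 (by ring)
    have key2 : f (t * a + (1-t) * (b+u)) ≤ t * f a + (1-t) * f (b+u) :=
      hcv.2 hmem1 hmem2 ht0 (by linarith) (by ring)
    have e1 : (1-t) * a + t * (b+u) = a + u := by
      rw [ht]; linear_combination (div_mul_cancel₀ u hD'.ne')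
    have e2 : t * a + (1-t) * (b+u) = b := by
      rw [ht]; linear_combination (-1 : ℝ) * (div_mul_cancel₀ u hD'.ne')
    rw [e1] at key1; rw [e2] at key2
    have : f (a+u) + f b ≤ f a + f (b+u) := by linarith
    simpa [hf] using this

lemma sum_shift {n : ℕ} (f h : Fin n → ℝ) (k0 : Fin n) (hfh : ∀ k, k ≠ k0 → f k = h k) :
    ∑ k, f k = (∑ k, h k) + (f k0 - h k0) := by
  rw [← Finset.sum_erase_add _ f (Finset.mem_univ k0),
    ← Finset.sum_erase_add _ h (Finset.mem_univ k0),
    Finset.sum_congr rfl (fun x hx => hfh x (Finset.ne_of_mem_erase hx))]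
  ring

lemma Gtrap {a b u : ℝ} (ha : 0 ≤ a) (hab : a ≤ b) (hu : 0 ≤ u) :
    (a+u) * Real.logb 2 (a+u) - a * Real.logb 2 a
      ≤ (b+u) * Real.logb 2 (b+u) - b * Real.logb 2 b := by
  have h := trapezoid ha hab hu
  have hlog2 : 0 < Real.log 2 := Real.log_pos (by norm_num)
  simp only [Real.logb]
  have e : ∀ x y : ℝ, x * (y / Real.log 2) = x * y / Real.log 2 := fun x y => by ring
  rw [e, e, e, e, div_sub_div_same, div_sub_div_same, div_le_div_iff_of_pos_right hlog2]
  linarith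

end Aux

/-- For ascending μ's and ρ_{i,u} = (1−u)|0⟩⟨0| + u|i⟩⟨i|, the environment output
entropy is nonincreasing in i and hence the coherent information of the qubit
sub-channels is nondecreasing in i. -/
theorem stmt18 (d : ℕ) (hd : 3 ≤ d) (μ : ℕ → ℝ)
    (hμ0 : ∀ j < d - 1, 0 ≤ μ j)
    (hμsum : ∑ j ∈ Finset.range (d - 1), (μ j) ^ 2 = 1)
    (hμmono : ∀ j k, j ≤ k → k < d - 1 → μ j ≤ μ k)
    (i j : ℕ) (hi : 1 ≤ i) (hij : i ≤ j) (hj : j ≤ d - 1)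
    (u : ℝ) (hu : u ∈ Set.Icc (0 : ℝ) 1) :
    let ρi : Matrix (Fin d) (Fin d) ℂ := ((1 - u : ℝ) : ℂ) • bproj d 0 + (u : ℂ) • bproj d i
    let ρj : Matrix (Fin d) (Fin d) ℂ := ((1 - u : ℝ) : ℂ) • bproj d 0 + (u : ℂ) • bproj d j
    vnEntropy (chanOc d μ ρj) ≤ vnEntropy (chanOc d μ ρi) ∧
    vnEntropy (chanO d μ ρi) - vnEntropy (chanOc d μ ρi) ≤
      vnEntropy (chanO d μ ρj) - vnEntropy (chanOc d μ ρj) := by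
  intro ρi ρj
  obtain ⟨hu0, hu1⟩ := hu
  rcases eq_or_lt_of_le hij with rfl | hlt
  · exact ⟨le_refl _, le_refl _⟩
  have hj1 : 1 ≤ j := le_trans hi hij
  have hid : i ≤ d - 1 := le_trans hij hj
  have hρi : ρi = ((1 - u : ℝ) : ℂ) • bproj d 0 + (u : ℂ) • bproj d i := rfl
  have hρj : ρj = ((1 - u : ℝ) : ℂ) • bproj d 0 + (u : ℂ) • bproj d j := rfl
  have hOeq : chanO d μ ρi = chanO d μ ρj := by
    rw [hρi, hρj, chanO_eval d hd μ u i hi hid, chanO_eval d hd μ u j hj1 hj]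
  set wi : Fin (d-1) → ℝ :=
    fun k => (1-u) * (μ (k:ℕ))^2 + if (k:ℕ) = i - 1 then u else 0 with hwi
  set wj : Fin (d-1) → ℝ :=
    fun k => (1-u) * (μ (k:ℕ))^2 + if (k:ℕ) = j - 1 then u else 0 with hwj
  have hSi : vnEntropy (chanOc d μ ρi) = -∑ k, wi k * Real.logb 2 (wi k) := by
    rw [hρi, chanOc_eval d hd μ u i hi hid, vnEntropy_diagonal]
  have hSj : vnEntropy (chanOc d μ ρj) = -∑ k, wj k * Real.logb 2 (wj k) := by
    rw [hρj, chanOc_eval d hd μ u j hj1 hj, vnEntropy_diagonal]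
  -- main inequality on the sums
  have hki : i - 1 < d - 1 := by omega
  have hkj : j - 1 < d - 1 := by omega
  set Ki : Fin (d-1) := ⟨i-1, hki⟩ with hKi
  set Kj : Fin (d-1) := ⟨j-1, hkj⟩ with hKj
  set base : Fin (d-1) → ℝ := fun k => (1-u) * (μ (k:ℕ))^2 with hbase
  set G : ℝ → ℝ := fun x => x * Real.logb 2 x with hG
  have hwiK : wi Ki = base Ki + u := by simp [hwi, hbase, hKi]
  have hwjK : wj Kj = base Kj + u := by simp [hwj, hbase, hKj]
  have hshift_i : ∑ k, G (wi k) = (∑ k, G (base k)) + (G (wi Ki) - G (base Ki)) := by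
    apply sum_shift
    intro k hk
    have : ¬ ((k:ℕ) = i - 1) := fun h => hk (Fin.ext (by simpa [hKi] using h))
    simp [hwi, hbase, this]
  have hshift_j : ∑ k, G (wj k) = (∑ k, G (base k)) + (G (wj Kj) - G (base Kj)) := by
    apply sum_shift
    intro k hk
    have : ¬ ((k:ℕ) = j - 1) := fun h => hk (Fin.ext (by simpa [hKj] using h))
    simp [hwj, hbase, this]
  have hbase_le : base Ki ≤ base Kj := by
    have hmono : μ (i-1) ≤ μ (j-1) := hμmono (i-1) (j-1) (by omega) (by omega)
    have h0 : 0 ≤ μ (i-1) := hμ0 (i-1) (by omega)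
    have : (μ (i-1))^2 ≤ (μ (j-1))^2 := by nlinarith
    simp only [hbase, hKi, hKj]
    nlinarith
  have hbase_nn : 0 ≤ base Ki := by
    simp only [hbase, hKi]
    have : 0 ≤ (μ (i-1))^2 := sq_nonneg _
    nlinarith
  have hGineq : G (base Ki + u) - G (base Ki) ≤ G (base Kj + u) - G (base Kj) := by
    simpa [hG] using Gtrap hbase_nn hbase_le hu0
  have hmain : ∑ k, G (wi k) ≤ ∑ k, G (wj k) := by
    rw [hshift_i, hshift_j, hwiK, hwjK]
    linarith
  have hmain' : ∑ k, wi k * Real.logb 2 (wi k) ≤ ∑ k, wj k * Real.logb 2 (wj k) := hmain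
  constructor
  · rw [hSi, hSj]
    linarith
  · rw [hOeq]
    rw [hSi, hSj]
    linarith
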